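/- Let E be a standard Borel space and let κ₀, …, κ_{n−1} be Markov (probability) kernels from E to E, modeling a discrete-time Markov chain. Given a bounded measurable terminal weight h_n : E → ℝ with h_n(x) > 0 for all x, define backward h_t(x) = ∫ h_{t+1}(x') κ_t(x, dx') for t = n−1, …, 0, and assume 0 < h_t(x) < ∞ for all x and t. Define the h-transformed kernels κ*_t(x, ·) := (κ_t(x, ·)).withDensity(x' ↦ h_{t+1}(x')/h_t(x)). Then for every initial point x₀ ∈ E, the terminal law of the h-transformed chain started at x₀ (i.e., the n-fold sequential composition δ_{x₀} bound successively by κ*₀, κ*₁, …, κ*_{n−1}) equals the terminal law of the original chain started at x₀ (δ_{x₀} bound successively by κ₀, …, κ_{n−1}) reweighted with density x ↦ h_n(x)/h_0(x₀). -/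

import Mathlib

open MeasureTheory ProbabilityTheory

/-- The law of the state at time `n` of a (possibly time-inhomogeneous) Markov chain
with transition (sub-)measures `K t` and initial law `μ`, obtained by successively
binding `μ` with `K 0, K 1, …, K (n-1)`. -/
noncomputable def chainLaw {E : Type*} [MeasurableSpace E]
    (K : ℕ → E → Measure E) (μ : Measure E) : ℕ → Measure E
  | 0 => μ
  | (n + 1) => (chainLaw K μ n).bind (K n)

/-- Discrete-time Doob h-transform: the terminal law of the h-transformed chain started
at `x₀` equals the terminal law of the original chain started at `x₀`, reweighted with
density `x ↦ h n x / h 0 x₀`. -/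
theorem h_transform_terminal_law {E : Type*} [MeasurableSpace E] [StandardBorelSpace E]
    (n : ℕ) (κ : ℕ → Kernel E E) [∀ t, IsMarkovKernel (κ t)]
    (h : ℕ → E → ℝ)
    (hmeas : Measurable (h n)) (hbdd : ∃ C, ∀ x, |h n x| ≤ C)
    (hposn : ∀ x, 0 < h n x)
    (hrec : ∀ t < n, ∀ x, h t x = ∫ x', h (t + 1) x' ∂(κ t x))
    (hpos : ∀ t ≤ n, ∀ x, 0 < h t x)
    (x₀ : E) :
    chainLaw (fun t x => (κ t x).withDensity
        (fun x' => ENNReal.ofReal (h (t + 1) x' / h t x))) (Measure.dirac x₀) n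
      = (chainLaw (fun t x => κ t x) (Measure.dirac x₀) n).withDensity
          (fun x => ENNReal.ofReal (h n x / h 0 x₀)) := by
  classical
  obtain ⟨C, hC⟩ := hbdd
  -- downward induction: measurability, bound, and lintegral recursion
  have key : ∀ k t, t + k = n → Measurable (h t) ∧
      (∀ x, ENNReal.ofReal (h t x) ≤ ENNReal.ofReal C) ∧
      (t < n → ∀ x, ENNReal.ofReal (h t x)
        = ∫⁻ x', ENNReal.ofReal (h (t + 1) x') ∂(κ t x)) := by
    intro k
    induction k with
    | zero =>
      intro t ht
      have : t = n := by omega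
      subst this
      exact ⟨hmeas, fun x => ENNReal.ofReal_le_ofReal ((le_abs_self _).trans (hC x)),
        fun hlt => absurd hlt (lt_irrefl _)⟩
    | succ k ih =>
      intro t ht
      have htlt : t < n := by omega
      obtain ⟨hm1, hb1, _⟩ := ih (t + 1) (by omega)
      have hint_meas : Measurable fun x => ∫⁻ x', ENNReal.ofReal (h (t + 1) x') ∂(κ t x) := by
        exact Measurable.lintegral_kernel_prod_right'
          ((ENNReal.measurable_ofReal.comp hm1).comp measurable_snd)
      have hint_le : ∀ x, (∫⁻ x', ENNReal.ofReal (h (t + 1) x') ∂(κ t x)) ≤ ENNReal.ofReal C := by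
        intro x
        calc ∫⁻ x', ENNReal.ofReal (h (t + 1) x') ∂(κ t x)
            ≤ ∫⁻ _, ENNReal.ofReal C ∂(κ t x) := lintegral_mono fun x' => hb1 x'
          _ = ENNReal.ofReal C := by simp
      have heq : ∀ x, h t x = (∫⁻ x', ENNReal.ofReal (h (t + 1) x') ∂(κ t x)).toReal := by
        intro x
        rw [hrec t htlt x, integral_eq_lintegral_of_nonneg_ae
          (Filter.Eventually.of_forall fun x' => (hpos (t + 1) (by omega) x').le)
          hm1.aestronglyMeasurable]
      have hfin : ∀ x, (∫⁻ x', ENNReal.ofReal (h (t + 1) x') ∂(κ t x)) ≠ ⊤ :=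
        fun x => ((hint_le x).trans_lt ENNReal.ofReal_lt_top).ne
      have hof : ∀ x, ENNReal.ofReal (h t x)
          = ∫⁻ x', ENNReal.ofReal (h (t + 1) x') ∂(κ t x) := by
        intro x
        rw [heq x, ENNReal.ofReal_toReal (hfin x)]
      refine ⟨?_, fun x => (hof x) ▸ hint_le x, fun _ x => hof x⟩
      have hfun : h t = fun x => (∫⁻ x', ENNReal.ofReal (h (t + 1) x') ∂(κ t x)).toReal :=
        funext heq
      rw [hfun]
      exact hint_meas.ennreal_toReal
  have hmea : ∀ t, t ≤ n → Measurable (h t) := fun t ht => (key (n - t) t (by omega)).1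
  have hble : ∀ t, t ≤ n → ∀ x, ENNReal.ofReal (h t x) ≤ ENNReal.ofReal C :=
    fun t ht => (key (n - t) t (by omega)).2.1
  have hlint : ∀ t, t < n → ∀ x, ENNReal.ofReal (h t x)
      = ∫⁻ x', ENNReal.ofReal (h (t + 1) x') ∂(κ t x) :=
    fun t ht => (key (n - t) t (by omega)).2.2 ht
  have hg0 : ENNReal.ofReal (h 0 x₀) ≠ 0 :=
    (ENNReal.ofReal_pos.mpr (hpos 0 n.zero_le x₀)).ne'
  have hg0' : ENNReal.ofReal (h 0 x₀) ≠ ⊤ := ENNReal.ofReal_ne_top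
  -- main forward induction
  have main : ∀ t, t ≤ n →
      chainLaw (fun t x => (κ t x).withDensity
          (fun x' => ENNReal.ofReal (h (t + 1) x' / h t x))) (Measure.dirac x₀) t
        = (chainLaw (fun t x => κ t x) (Measure.dirac x₀) t).withDensity
            (fun x => ENNReal.ofReal (h t x) * (ENNReal.ofReal (h 0 x₀))⁻¹) := by
    intro t
    induction t with
    | zero =>
      intro _
      simp only [chainLaw]
      ext s hs
      rw [withDensity_apply _ hs,
        setLIntegral_dirac' (((hmea 0 n.zero_le).ennreal_ofReal).mul_const _) hs,
        ENNReal.mul_inv_cancel hg0 hg0', Measure.dirac_apply' _ hs]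
      by_cases hx : x₀ ∈ s <;> simp [hx]
    | succ t ih =>
      intro hlt
      have ht : t ≤ n := by omega
      have htn : t < n := by omega
      have hgt0 : ∀ x, ENNReal.ofReal (h t x) ≠ 0 :=
        fun x => (ENNReal.ofReal_pos.mpr (hpos t ht x)).ne'
      have hgt' : ∀ x : E, ENNReal.ofReal (h t x) ≠ ⊤ := fun _ => ENNReal.ofReal_ne_top
      have hunc : Measurable (Function.uncurry
          fun x x' => ENNReal.ofReal (h (t + 1) x' / h t x)) := by
        have hfe : (Function.uncurry fun x x' => ENNReal.ofReal (h (t + 1) x' / h t x))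
            = fun p : E × E =>
              ENNReal.ofReal (h (t + 1) p.2) * (ENNReal.ofReal (h t p.1))⁻¹ := by
          funext p
          simp only [Function.uncurry]
          rw [ENNReal.ofReal_div_of_pos (hpos t ht p.1), div_eq_mul_inv]
        rw [hfe]
        exact ((ENNReal.measurable_ofReal.comp (hmea (t + 1) hlt)).comp measurable_snd).mul
          (((ENNReal.measurable_ofReal.comp (hmea t ht)).comp measurable_fst).inv)
      have hKer : (fun x => (κ t x).withDensity
            fun x' => ENNReal.ofReal (h (t + 1) x' / h t x))
          = ⇑(Kernel.withDensity (κ t) fun x x' => ENNReal.ofReal (h (t + 1) x' / h t x)) := by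
        funext x
        rw [Kernel.withDensity_apply _ hunc]
      have hKmeas : Measurable fun x => (κ t x).withDensity
          fun x' => ENNReal.ofReal (h (t + 1) x' / h t x) := by
        rw [hKer]; exact Kernel.measurable _
      have hwmeas : Measurable fun x =>
          ENNReal.ofReal (h t x) * (ENNReal.ofReal (h 0 x₀))⁻¹ :=
        (ENNReal.measurable_ofReal.comp (hmea t ht)).mul_const _
      have hwfin : ∀ᵐ x ∂(chainLaw (fun t x => κ t x) (Measure.dirac x₀) t),
          ENNReal.ofReal (h t x) * (ENNReal.ofReal (h 0 x₀))⁻¹ < ⊤ :=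
        Filter.Eventually.of_forall fun x =>
          ENNReal.mul_lt_top ENNReal.ofReal_lt_top (ENNReal.inv_lt_top.mpr
            (ENNReal.ofReal_pos.mpr (hpos 0 n.zero_le x₀)))
      have hind_meas : Measurable fun x' => Set.indicator (Set.univ : Set E)
          (fun y => ENNReal.ofReal (h (t + 1) y) * (ENNReal.ofReal (h 0 x₀))⁻¹) x' := by
        exact ((ENNReal.measurable_ofReal.comp (hmea (t + 1) hlt)).mul_const _).indicator
          MeasurableSet.univ
      simp only [chainLaw]
      rw [ih ht]
      ext s hs
      have hden_meas : Measurable fun y =>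
          ENNReal.ofReal (h (t + 1) y) * (ENNReal.ofReal (h 0 x₀))⁻¹ :=
        (ENNReal.measurable_ofReal.comp (hmea (t + 1) hlt)).mul_const _
      rw [Measure.bind_apply hs hKmeas.aemeasurable, withDensity_apply _ hs,
        lintegral_withDensity_eq_lintegral_mul_non_measurable _ hwmeas hwfin,
        ← lintegral_indicator hs, Measure.lintegral_bind (κ t).measurable.aemeasurable
          (hden_meas.indicator hs).aemeasurable]
      refine lintegral_congr fun x => ?_
      simp only [Pi.mul_apply]
      rw [withDensity_apply _ hs]
      have hpw : ∀ x', x' ∈ s → ENNReal.ofReal (h (t + 1) x' / h t x)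
          = ENNReal.ofReal (h (t + 1) x') * (ENNReal.ofReal (h t x))⁻¹ := by
        intro x' _
        rw [ENNReal.ofReal_div_of_pos (hpos t ht x), div_eq_mul_inv]
      rw [setLIntegral_congr_fun hs (fun x' hx' => hpw x' hx'),
        lintegral_mul_const _ ((hmea (t + 1) hlt).ennreal_ofReal),
        lintegral_indicator hs,
        lintegral_mul_const _ ((hmea (t + 1) hlt).ennreal_ofReal)]
      calc ENNReal.ofReal (h t x) * (ENNReal.ofReal (h 0 x₀))⁻¹ *
            ((∫⁻ x' in s, ENNReal.ofReal (h (t + 1) x') ∂κ t x) * (ENNReal.ofReal (h t x))⁻¹)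
          = ENNReal.ofReal (h t x) * (ENNReal.ofReal (h t x))⁻¹ *
            ((∫⁻ x' in s, ENNReal.ofReal (h (t + 1) x') ∂κ t x) *
              (ENNReal.ofReal (h 0 x₀))⁻¹) := by ring
        _ = (∫⁻ x' in s, ENNReal.ofReal (h (t + 1) x') ∂κ t x) *
              (ENNReal.ofReal (h 0 x₀))⁻¹ := by
            rw [ENNReal.mul_inv_cancel (hgt0 x) (hgt' x), one_mul]
  have hdens : (fun x => ENNReal.ofReal (h n x / h 0 x₀))
      = fun x => ENNReal.ofReal (h n x) * (ENNReal.ofReal (h 0 x₀))⁻¹ := by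
    funext x
    rw [ENNReal.ofReal_div_of_pos (hpos 0 n.zero_le x₀), div_eq_mul_inv]
  rw [hdens]
  exact main n le_rfl
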